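/- Let M be a cancellative monoid with no nontrivial invertible element, generated by S. Then for each ℓ there is at most one right-top S-word of length ℓ, and there is at most one right-S-ceiling in M; when it exists, every right-top word is a final fragment of the ceiling. -/

import Mathlib

namespace Stmt8

variable {M : Type*} [Monoid M]

/-- `g` is a product of `n` elements of `S`. -/
def InPow (S : Set M) (n : ℕ) (g : M) : Prop :=
  ∃ l : List M, l.length = n ∧ (∀ x ∈ l, x ∈ S) ∧ l.prod = g

/-- `w` is a right-top `S`-word: a word over `S` whose value is left-divisible by every
product of `|w|` elements of `S`. -/
def RightTop (S : Set M) (w : List M) : Prop :=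
  (∀ x ∈ w, x ∈ S) ∧ ∀ g : M, InPow S w.length g → g ∣ w.prod

/-- `c` encodes a right-`S`-ceiling `… s₂ s₁` (with `c k = s_{k+1}`): for every `n` the
word `s_n ⋯ s₁` is a right-top `S`-word. -/
def IsCeiling (S : Set M) (c : ℕ → M) : Prop :=
  ∀ n : ℕ, RightTop S (((List.range n).map c).reverse)

/-- **Lemma 5.4.** In a cancellative monoid with no nontrivial invertible element,
generated by `S`, there is at most one right-top `S`-word of each length, at most one
right-`S`-ceiling, and every right-top word is a final fragment of the ceiling. -/
theorem stmt_8 (S : Set M)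
    (hlcancel : ∀ a b c : M, a * b = a * c → b = c)
    (hrcancel : ∀ a b c : M, a * c = b * c → a = b)
    (hunits : ∀ a b : M, a * b = 1 → a = 1)
    (hgen : Submonoid.closure S = ⊤) :
    (∀ w w' : List M, RightTop S w → RightTop S w' → w.length = w'.length → w = w') ∧
    (∀ c c' : ℕ → M, IsCeiling S c → IsCeiling S c' → c = c') ∧
    (∀ c : ℕ → M, IsCeiling S c → ∀ w : List M, RightTop S w →
      w = ((List.range w.length).map c).reverse) := by
  have tail_rt : ∀ (s : M) (t : List M), RightTop S (s :: t) → RightTop S t := by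
    rintro s t ⟨hmem, hdiv⟩
    refine ⟨fun x hx => hmem x (List.mem_cons_of_mem _ hx), ?_⟩
    rintro g ⟨l, hl, hlS, hlp⟩
    have hin : InPow S (s :: t).length (s * g) := by
      refine ⟨s :: l, by simp [hl], ?_, by simp [hlp]⟩
      intro x hx
      rcases List.mem_cons.mp hx with h | h
      · exact h ▸ hmem s List.mem_cons_self
      · exact hlS x h
    obtain ⟨u, hu⟩ := hdiv _ hin
    refine ⟨u, hlcancel s _ _ ?_⟩
    simpa [mul_assoc] using hu
  have prod_eq : ∀ w w' : List M, RightTop S w → RightTop S w' → w.length = w'.length →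
      w.prod = w'.prod := by
    intro w w' hw hw' hlen
    obtain ⟨u, hu⟩ := hw'.2 w.prod ⟨w, hlen, hw.1, rfl⟩
    obtain ⟨v, hv⟩ := hw.2 w'.prod ⟨w', hlen.symm, hw'.1, rfl⟩
    have h1 : w.prod * (u * v) = w.prod * 1 := by
      rw [mul_one, ← mul_assoc, ← hu, ← hv]
    have hu1 : u = 1 := hunits _ _ (hlcancel _ _ _ h1)
    rw [hu, hu1, mul_one]
  have uniq : ∀ w w' : List M, RightTop S w → RightTop S w' → w.length = w'.length →
      w = w' := by
    intro w
    induction w with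
    | nil =>
      intro w' _ _ hlen
      exact (List.length_eq_zero_iff.mp hlen.symm).symm
    | cons s t ih =>
      intro w' hw hw' hlen
      cases w' with
      | nil => simp at hlen
      | cons s' t' =>
        have hlen' : t.length = t'.length := by simpa using hlen
        have ht := ih t' (tail_rt s t hw) (tail_rt s' t' hw') hlen'
        have hp := prod_eq _ _ hw hw' hlen
        simp only [List.prod_cons, ht] at hp
        rw [hrcancel _ _ _ hp, ht]
  refine ⟨uniq, ?_, ?_⟩
  · intro c c' hc hc'
    funext n
    have h := uniq _ _ (hc (n + 1)) (hc' (n + 1)) (by simp)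
    simp [List.range_succ] at h
    exact h.1
  · intro c hc w hw
    exact uniq w _ hw (hc w.length) (by simp)

end Stmt8
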